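/- arXiv:1403.6602 — 2 statements merged into one kernel-verified Lean document; each statement's English description precedes it below -/
import Mathlib

section
/- Let t = (t₁,t₂,t₃) ∈ ℕ³, k = t₁+t₂+t₃+2, and let w ≥ k be an integer. Define the exact swap toll e_n = ((t₁+1)/(k+1))·(n−k) + ((t₁+t₂+2)(t₃+1)/((k+1)(k+2)))·(n−k−1) + (t₃+1)/(k+1) for n > w. Then any sequence (S_n) with arbitrary fixed values for n ≤ w and S_n = e_n + Σ_{j=0}^{n−2} w_{n,j}·S_j for n > w satisfies S_n / (n·ln n) → a_S / H(t) as n → ∞, where a_S = (t₁+1)/(k+1) + (t₁+t₂+2)(t₃+1)/((k+1)(k+2)). -/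
open Finset Filter Real Asymptotics

/-- The `n`-th harmonic number `H_n = ∑_{i=1}^n 1/i`. -/
noncomputable def harm (n : ℕ) : ℝ := ∑ i ∈ Finset.range n, (1 : ℝ) / (i + 1)

/-- The discrete entropy `H(t)` of `t = (t₁,t₂,t₃)` with `k = t₁+t₂+t₃+2`. -/
noncomputable def Hdisc (t1 t2 t3 : ℕ) : ℝ :=
  ((t1 : ℝ) + 1) / ((t1 : ℝ) + t2 + t3 + 3) * (harm (t1 + t2 + t3 + 3) - harm (t1 + 1))
  + ((t2 : ℝ) + 1) / ((t1 : ℝ) + t2 + t3 + 3) * (harm (t1 + t2 + t3 + 3) - harm (t2 + 1))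
  + ((t3 : ℝ) + 1) / ((t1 : ℝ) + t2 + t3 + 3) * (harm (t1 + t2 + t3 + 3) - harm (t3 + 1))

/-- Rising factorial `a^{(m)} = a (a+1) ⋯ (a+m−1)`. -/
def ascNat (a m : ℕ) : ℕ := ∏ i ∈ Finset.range m, (a + i)

/-- `π_l(N, i) = binom(N,i) (t+1)^{(i)} (k−t)^{(N−i)} / (k+1)^{(N)}` for `0 ≤ i ≤ N`, else `0`. -/
noncomputable def piw (t k N : ℕ) (i : ℤ) : ℝ :=
  if 0 ≤ i ∧ i ≤ (N : ℤ) then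
    (N.choose i.toNat : ℝ) * (ascNat (t + 1) i.toNat : ℝ)
      * (ascNat (k - t) (N - i.toNat) : ℝ) / (ascNat (k + 1) N : ℝ)
  else 0

/-- The recurrence weights `w_{n,j} = ∑_{l=1}^3 π_l(n−k, j−t_l)`. -/
noncomputable def wgt (t1 t2 t3 n j : ℕ) : ℝ :=
  piw t1 (t1 + t2 + t3 + 2) (n - (t1 + t2 + t3 + 2)) ((j : ℤ) - t1)
  + piw t2 (t1 + t2 + t3 + 2) (n - (t1 + t2 + t3 + 2)) ((j : ℤ) - t2)
  + piw t3 (t1 + t2 + t3 + 2) (n - (t1 + t2 + t3 + 2)) ((j : ℤ) - t3)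

/-! ### Auxiliary lemmas -/

lemma harm_succ (n : ℕ) : harm (n+1) = harm n + 1/((n:ℝ)+1) := Finset.sum_range_succ _ n

lemma harm_eq (n : ℕ) : harm n = (harmonic n : ℝ) := by
  rw [harm, harmonic]; push_cast; simp [one_div]

lemma harm_lt_harm {m n : ℕ} (h : m < n) : harm m < harm n := by
  refine Finset.sum_lt_sum_of_subset (Finset.range_subset_range.2 h.le) (i := m) (by simp [h]) (by simp)
    (by positivity) (fun j _ _ => by positivity)

lemma ascNat_zero (a : ℕ) : ascNat a 0 = 1 := rfl
lemma ascNat_succ (a m : ℕ) : ascNat a (m+1) = ascNat a m * (a + m) := Finset.prod_range_succ _ _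

lemma ascNat_shift (a N : ℕ) : a * ascNat (a+1) N = ascNat a N * (a + N) := by
  induction N with
  | zero => simp [ascNat_zero]
  | succ N ih =>
    rw [ascNat_succ, ascNat_succ, ← mul_assoc, ih]
    ring_nf

noncomputable def Wr (a b N i : ℕ) : ℝ :=
  (N.choose i : ℝ) * (ascNat a i : ℝ) * (ascNat b (N - i) : ℝ)

lemma Wr_nonneg (a b N i : ℕ) : 0 ≤ Wr a b N i := by unfold Wr; positivity

lemma Wr_zero (a b N : ℕ) : Wr a b N 0 = (ascNat b N : ℝ) := by
  simp [Wr, ascNat_zero]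

lemma Wr_top (a b N : ℕ) : Wr a b N N = (ascNat a N : ℝ) := by
  simp [Wr, ascNat_zero]

lemma Wr_gt (a b N i : ℕ) (h : N < i) : Wr a b N i = 0 := by
  simp [Wr, Nat.choose_eq_zero_of_lt h]

lemma Wr_succ_zero (a b N : ℕ) : Wr a b (N+1) 0 = Wr a b N 0 * ((b:ℝ) + N) := by
  rw [Wr_zero, Wr_zero, ascNat_succ]; push_cast; ring

lemma Wr_step (a b N i : ℕ) (hi : i ≤ N) :
    Wr a b (N+1) (i+1)
      = Wr a b N (i+1) * (((b:ℝ) + N) - (i+1)) + Wr a b N i * ((a:ℝ) + i) := by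
  rcases eq_or_lt_of_le hi with rfl | hi'
  · rw [Wr_gt a b i (i+1) (Nat.lt_succ_self i), Wr_top, Wr_top, ascNat_succ]
    push_cast; ring
  · have h1 : i + 1 ≤ N := hi'
    have hsub : N + 1 - (i+1) = (N - (i+1)) + 1 := by omega
    have hsub2 : N - i = (N - (i+1)) + 1 := by omega
    unfold Wr
    rw [Nat.choose_succ_succ, hsub, hsub2]
    simp only [ascNat_succ]
    have hc : ((N - (i+1) : ℕ) : ℝ) = (N : ℝ) - (i+1) := by
      push_cast [Nat.cast_sub h1]; ring
    push_cast [hc]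
    ring

lemma Wsum_step (a b N : ℕ) (φ : ℕ → ℝ) :
    ∑ i ∈ Finset.range (N+2), Wr a b (N+1) i * φ i
      = ∑ i ∈ Finset.range (N+1),
          Wr a b N i * ((((b:ℝ)+N) - i) * φ i + ((a:ℝ)+i) * φ (i+1)) := by
  rw [Finset.sum_range_succ']
  have hstep : ∀ i ∈ Finset.range (N+1),
      Wr a b (N+1) (i+1) * φ (i+1)
        = Wr a b N (i+1) * ((((b:ℝ)+N) - ((i:ℝ)+1)) * φ (i+1))
          + Wr a b N i * (((a:ℝ)+i) * φ (i+1)) := by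
    intro i hi
    rw [Wr_step a b N i (Nat.lt_succ_iff.mp (Finset.mem_range.mp hi))]
    ring
  rw [Finset.sum_congr rfl hstep, Finset.sum_add_distrib]
  have hA : ∑ i ∈ Finset.range (N+1), Wr a b N (i+1) * ((((b:ℝ)+N) - ((i:ℝ)+1)) * φ (i+1))
      = (∑ i ∈ Finset.range (N+1), Wr a b N i * ((((b:ℝ)+N) - (i:ℝ)) * φ i))
        - Wr a b N 0 * ((((b:ℝ)+N) - ((0:ℕ):ℝ)) * φ 0) := by
    have h := Finset.sum_range_succ' (fun i => Wr a b N i * ((((b:ℝ)+N) - (i:ℝ)) * φ i)) (N+1)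
    rw [Finset.sum_range_succ, Wr_gt a b N (N+1) (Nat.lt_succ_self N)] at h
    push_cast at h ⊢
    linarith [h]
  have h0 : Wr a b (N+1) 0 * φ 0 = Wr a b N 0 * ((((b:ℝ)+N) - ((0:ℕ):ℝ)) * φ 0) := by
    rw [Wr_succ_zero]; push_cast; ring
  have hRHS : ∑ i ∈ Finset.range (N+1),
        Wr a b N i * ((((b:ℝ)+N) - i) * φ i + ((a:ℝ)+i) * φ (i+1))
      = (∑ i ∈ Finset.range (N+1), Wr a b N i * ((((b:ℝ)+N) - (i:ℝ)) * φ i))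
        + ∑ i ∈ Finset.range (N+1), Wr a b N i * (((a:ℝ)+i) * φ (i+1)) := by
    simp only [mul_add]; exact Finset.sum_add_distrib
  rw [h0, hRHS, hA]
  ring

lemma Wsum_one (a b N : ℕ) :
    ∑ i ∈ Finset.range (N+1), Wr a b N i = (ascNat (a+b) N : ℝ) := by
  induction N with
  | zero => simp [Wr_zero, ascNat_zero]
  | succ N ih =>
    have h := Wsum_step a b N (fun _ => 1)
    simp only [mul_one] at h
    rw [h, ascNat_succ]
    have : ∀ i ∈ Finset.range (N+1),
        Wr a b N i * ((((b:ℝ)+N) - i) + ((a:ℝ)+i))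
          = Wr a b N i * (((a:ℝ)+b+N)) := by
      intro i _; ring
    rw [Finset.sum_congr rfl this, ← Finset.sum_mul, ih]
    push_cast; ring

lemma Wsum_id (a b N : ℕ) :
    ∑ i ∈ Finset.range (N+1), Wr a b N i * ((i:ℝ) + a)
      = (a : ℝ) * (ascNat (a+b+1) N : ℝ) := by
  induction N with
  | zero => simp [Wr_zero, ascNat_zero]
  | succ N ih =>
    rw [Wsum_step a b N (fun i => (i:ℝ) + a)]
    have : ∀ i ∈ Finset.range (N+1),
        Wr a b N i * ((((b:ℝ)+N) - i) * ((i:ℝ)+a) + ((a:ℝ)+i) * (((i+1:ℕ):ℝ)+a))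
          = (((a:ℝ)+b+N+1)) * (Wr a b N i * ((i:ℝ)+a)) := by
      intro i _; push_cast; ring
    rw [Finset.sum_congr rfl this, ← Finset.mul_sum, ih, ascNat_succ]
    push_cast; ring

lemma Wsum_harm (a b N : ℕ) :
    ∑ i ∈ Finset.range (N+1), Wr a b N i * (((i:ℝ) + a) * harm (i+a))
      = (a : ℝ) * (ascNat (a+b+1) N : ℝ) * (harm a + harm (a+b+N) - harm (a+b)) := by
  induction N with
  | zero => simp [Wr_zero, ascNat_zero]
  | succ N ih =>
    rw [Wsum_step a b N (fun i => ((i:ℝ) + a) * harm (i+a))]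
    have key : ∀ i ∈ Finset.range (N+1),
        Wr a b N i * ((((b:ℝ)+N) - i) * (((i:ℝ)+a) * harm (i+a))
            + ((a:ℝ)+i) * ((((i+1:ℕ):ℝ)+a) * harm ((i+1)+a)))
          = (((a:ℝ)+b+N+1)) * (Wr a b N i * (((i:ℝ)+a) * harm (i+a)))
            + Wr a b N i * ((i:ℝ)+a) := by
      intro i _
      have hidx : (i+1)+a = (i+a)+1 := by omega
      have hh : (((i:ℝ)+a)+1) * harm ((i+a)+1) = (((i:ℝ)+a)+1) * harm (i+a) + 1 := by
        rw [harm_succ]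
        have : ((i:ℝ)+a) + 1 ≠ 0 := by positivity
        field_simp
        push_cast
        ring
      rw [hidx]
      push_cast
      push_cast at hh
      linear_combination (Wr a b N i * ((a:ℝ) + (i:ℝ))) * hh
    rw [Finset.sum_congr rfl key, Finset.sum_add_distrib, ← Finset.mul_sum, ih, Wsum_id,
      ascNat_succ]
    have hsucc : harm (a+b+(N+1)) = harm (a+b+N) + 1/(((a:ℝ)+b+N)+1) := by
      have : a+b+(N+1) = (a+b+N)+1 := by omega
      rw [this, harm_succ]; push_cast; ring_nf
    rw [hsucc]
    have hne : ((a:ℝ)+b+N) + 1 ≠ 0 := by positivity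
    field_simp
    push_cast
    ring

lemma piw_nonneg (t k N : ℕ) (i : ℤ) : 0 ≤ piw t k N i := by
  rw [piw]
  split
  · positivity
  · exact le_refl 0

lemma wgt_nonneg (t1 t2 t3 n j : ℕ) : 0 ≤ wgt t1 t2 t3 n j := by
  unfold wgt
  have := piw_nonneg t1 (t1+t2+t3+2) (n - (t1+t2+t3+2)) ((j:ℤ) - t1)
  have := piw_nonneg t2 (t1+t2+t3+2) (n - (t1+t2+t3+2)) ((j:ℤ) - t2)
  have := piw_nonneg t3 (t1+t2+t3+2) (n - (t1+t2+t3+2)) ((j:ℤ) - t3)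
  linarith

lemma piw_eval (t k N i : ℕ) (hi : i ≤ N) :
    piw t k N (i : ℤ) = Wr (t+1) (k-t) N i / (ascNat (k+1) N : ℝ) := by
  rw [piw, if_pos ⟨Int.natCast_nonneg i, by exact_mod_cast hi⟩, Wr, Int.toNat_natCast]

lemma sum_piw (t k N n : ℕ) (ht : t + 2 ≤ k) (hn : n = N + k) (φ : ℕ → ℝ) :
    ∑ j ∈ Finset.range (n-1), piw t k N ((j:ℤ) - t) * φ j
      = (∑ i ∈ Finset.range (N+1), Wr (t+1) (k-t) N i * φ (i+t)) / (ascNat (k+1) N : ℝ) := by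
  have hsub : Finset.Ico t (N+t+1) ⊆ Finset.range (n-1) := by
    intro x hx
    simp only [Finset.mem_Ico] at hx
    simp only [Finset.mem_range]
    omega
  have hvan : ∀ x ∈ Finset.range (n-1), x ∉ Finset.Ico t (N+t+1) →
      piw t k N ((x:ℤ) - t) * φ x = 0 := by
    intro x _ hx
    simp only [Finset.mem_Ico, not_and, not_lt] at hx
    have : ¬ (0 ≤ (x:ℤ) - t ∧ (x:ℤ) - t ≤ (N:ℤ)) := by
      intro ⟨h1, h2⟩
      have hxt : t ≤ x := by omega
      have := hx hxt
      omega
    rw [piw, if_neg this, zero_mul]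
  rw [← Finset.sum_subset hsub hvan]
  rw [Finset.sum_Ico_eq_sum_range]
  have hNt : N + t + 1 - t = N + 1 := by omega
  rw [hNt]
  rw [Finset.sum_div]
  refine Finset.sum_congr rfl fun i hi => ?_
  have hiN : i ≤ N := by
    simp only [Finset.mem_range] at hi; omega
  have hc : ((t + i : ℕ) : ℤ) - (t : ℤ) = (i : ℤ) := by push_cast; ring
  rw [hc, piw_eval t k N i hiN]
  have : t + i = i + t := by omega
  rw [this, div_mul_eq_mul_div]

lemma sum_wgt (t1 t2 t3 n k : ℕ) (hk : k = t1+t2+t3+2) (hn : k ≤ n) (φ : ℕ → ℝ) :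
    ∑ j ∈ Finset.range (n-1), wgt t1 t2 t3 n j * φ j
      = ((∑ i ∈ Finset.range (n-k+1), Wr (t1+1) (k-t1) (n-k) i * φ (i+t1))
        + (∑ i ∈ Finset.range (n-k+1), Wr (t2+1) (k-t2) (n-k) i * φ (i+t2))
        + (∑ i ∈ Finset.range (n-k+1), Wr (t3+1) (k-t3) (n-k) i * φ (i+t3)))
        / (ascNat (k+1) (n-k) : ℝ) := by
  subst hk
  simp only [wgt, add_mul]
  rw [Finset.sum_add_distrib, Finset.sum_add_distrib,
    sum_piw _ _ _ _ (by omega) (by omega),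
    sum_piw _ _ _ _ (by omega) (by omega),
    sum_piw _ _ _ _ (by omega) (by omega)]
  rw [add_div, add_div]

lemma ascNat_ne_zero (k N : ℕ) : (ascNat (k+1) N : ℝ) ≠ 0 := by
  have h : 0 < ascNat (k+1) N :=
    Finset.prod_pos (fun i _ => by positivity)
  positivity

lemma sum_wgt_one (t1 t2 t3 n k : ℕ) (hk : k = t1+t2+t3+2) (hn : k ≤ n) :
    ∑ j ∈ Finset.range (n-1), wgt t1 t2 t3 n j * 1 = 3 := by
  rw [sum_wgt t1 t2 t3 n k hk hn]
  simp only [mul_one]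
  have e1 : (t1+1)+(k-t1) = k+1 := by omega
  have e2 : (t2+1)+(k-t2) = k+1 := by omega
  have e3 : (t3+1)+(k-t3) = k+1 := by omega
  rw [Wsum_one, Wsum_one, Wsum_one, e1, e2, e3]
  rw [div_eq_iff (ascNat_ne_zero k (n-k))]
  ring

lemma sum_wgt_linear (t1 t2 t3 n k : ℕ) (hk : k = t1+t2+t3+2) (hn : k ≤ n) :
    ∑ j ∈ Finset.range (n-1), wgt t1 t2 t3 n j * ((j:ℝ) + 1) = (n:ℝ) + 1 := by
  rw [sum_wgt t1 t2 t3 n k hk hn]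
  have hφ : ∀ t : ℕ, ∀ i ∈ Finset.range (n-k+1),
      Wr (t+1) (k-t) (n-k) i * (((i+t : ℕ):ℝ) + 1)
        = Wr (t+1) (k-t) (n-k) i * ((i:ℝ) + ((t+1 : ℕ):ℝ)) := by
    intro t i _; push_cast; ring
  rw [Finset.sum_congr rfl (hφ t1), Finset.sum_congr rfl (hφ t2),
    Finset.sum_congr rfl (hφ t3), Wsum_id, Wsum_id, Wsum_id]
  have e1 : (t1+1)+(k-t1)+1 = k+2 := by omega
  have e2 : (t2+1)+(k-t2)+1 = k+2 := by omega
  have e3 : (t3+1)+(k-t3)+1 = k+2 := by omega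
  rw [e1, e2, e3]
  have h1 := ascNat_shift (k+1) (n-k)
  have h2 : k+1+(n-k) = n+1 := by omega
  rw [h2] at h1
  have h1r : ((k:ℝ)+1) * (ascNat (k+2) (n-k) : ℝ) = (ascNat (k+1) (n-k) : ℝ) * ((n:ℝ)+1) := by
    exact_mod_cast congrArg (fun x : ℕ => (x : ℝ)) h1
  rw [div_eq_iff (ascNat_ne_zero k (n-k))]
  have hsum : ((t1:ℝ)+1) + ((t2:ℝ)+1) + ((t3:ℝ)+1) = (k:ℝ)+1 := by
    subst hk; push_cast; ring
  push_cast at h1r hsum ⊢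
  nlinarith [h1r, hsum]

lemma sum_wgt_harm (t1 t2 t3 n k : ℕ) (hk : k = t1+t2+t3+2) (hn : k ≤ n) :
    ((k:ℝ)+1) * ∑ j ∈ Finset.range (n-1), wgt t1 t2 t3 n j * (((j:ℝ)+1) * harm (j+1))
      = ((n:ℝ)+1) * ( ((t1:ℝ)+1) * (harm (t1+1) + harm (n+1) - harm (k+1))
        + ((t2:ℝ)+1) * (harm (t2+1) + harm (n+1) - harm (k+1))
        + ((t3:ℝ)+1) * (harm (t3+1) + harm (n+1) - harm (k+1)) ) := by
  rw [sum_wgt t1 t2 t3 n k hk hn]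
  have hφ : ∀ t : ℕ, ∀ i ∈ Finset.range (n-k+1),
      Wr (t+1) (k-t) (n-k) i * ((((i+t : ℕ):ℝ)+1) * harm ((i+t)+1))
        = Wr (t+1) (k-t) (n-k) i * (((i:ℝ) + ((t+1 : ℕ):ℝ)) * harm (i+(t+1))) := by
    intro t i _
    have hidx : (i+t)+1 = i+(t+1) := by omega
    rw [hidx]; push_cast; ring
  rw [Finset.sum_congr rfl (hφ t1), Finset.sum_congr rfl (hφ t2),
    Finset.sum_congr rfl (hφ t3), Wsum_harm, Wsum_harm, Wsum_harm]
  have e1 : ∀ t : ℕ, t + 2 ≤ k → (t+1)+(k-t) = k+1 := by intro t ht; omega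
  have e2 : ∀ t : ℕ, t + 2 ≤ k → (t+1)+(k-t)+1 = k+2 := by intro t ht; omega
  have e3 : ∀ t : ℕ, t + 2 ≤ k → (t+1)+(k-t)+(n-k) = n+1 := by intro t ht; omega
  rw [e2 t1 (by omega), e2 t2 (by omega), e2 t3 (by omega),
    e3 t1 (by omega), e3 t2 (by omega), e3 t3 (by omega),
    e1 t1 (by omega), e1 t2 (by omega), e1 t3 (by omega)]
  rw [← mul_div_assoc, div_eq_iff (ascNat_ne_zero k (n-k))]
  have h1 := ascNat_shift (k+1) (n-k)
  have h2 : k+1+(n-k) = n+1 := by omega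
  rw [h2] at h1
  have h1r : ((k:ℝ)+1) * (ascNat (k+2) (n-k) : ℝ) = (ascNat (k+1) (n-k) : ℝ) * ((n:ℝ)+1) := by
    exact_mod_cast congrArg (fun x : ℕ => (x : ℝ)) h1
  push_cast at h1r ⊢
  linear_combination (((t1:ℝ)+1) * (harm (t1+1) + harm (n+1) - harm (k+1))
    + ((t2:ℝ)+1) * (harm (t2+1) + harm (n+1) - harm (k+1))
    + ((t3:ℝ)+1) * (harm (t3+1) + harm (n+1) - harm (k+1))) * h1r

lemma Hdisc_eq (t1 t2 t3 k : ℕ) (hk : k = t1+t2+t3+2) :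
    ((k:ℝ)+1) * Hdisc t1 t2 t3
      = ((t1:ℝ)+1)*(harm (k+1) - harm (t1+1)) + ((t2:ℝ)+1)*(harm (k+1) - harm (t2+1))
        + ((t3:ℝ)+1)*(harm (k+1) - harm (t3+1)) := by
  subst hk
  rw [Hdisc]
  have hidx : t1+t2+t3+2+1 = t1+t2+t3+3 := by omega
  rw [hidx]
  have hD : (t1:ℝ)+t2+t3+3 ≠ 0 := by positivity
  have hcast : ((t1+t2+t3+2 : ℕ):ℝ)+1 = (t1:ℝ)+t2+t3+3 := by push_cast; ring
  rw [hcast]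
  field_simp

lemma Hdisc_pos (t1 t2 t3 : ℕ) : 0 < Hdisc t1 t2 t3 := by
  rw [Hdisc]
  have hD : (0:ℝ) < (t1:ℝ)+t2+t3+3 := by positivity
  have hterm : ∀ t : ℕ, t + 1 < t1+t2+t3+3 →
      0 < ((t:ℝ)+1) / ((t1:ℝ)+t2+t3+3) * (harm (t1+t2+t3+3) - harm (t+1)) := by
    intro t ht
    apply mul_pos (by positivity)
    have := harm_lt_harm ht
    linarith
  have h1 := hterm t1 (by omega)
  have h2 := hterm t2 (by omega)
  have h3 := hterm t3 (by omega)
  linarith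

/-- The swap-count recurrence of Generalized Yaroslavskiy Quicksort:
its solution satisfies `S_n / (n ln n) → a_S / H(t)`. -/
theorem stmt2 (t1 t2 t3 w k : ℕ) (hk : k = t1 + t2 + t3 + 2) (hw : k ≤ w)
    (S : ℕ → ℝ)
    (hrec : ∀ n : ℕ, w < n →
      S n = ((t1 : ℝ) + 1) / ((k : ℝ) + 1) * ((n : ℝ) - k)
          + ((t1 : ℝ) + t2 + 2) * ((t3 : ℝ) + 1) / (((k : ℝ) + 1) * ((k : ℝ) + 2))
              * ((n : ℝ) - k - 1)
          + ((t3 : ℝ) + 1) / ((k : ℝ) + 1)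
          + ∑ j ∈ Finset.range (n - 1), wgt t1 t2 t3 n j * S j) :
    Tendsto (fun n : ℕ => S n / ((n : ℝ) * Real.log n)) atTop
      (nhds ((((t1 : ℝ) + 1) / ((k : ℝ) + 1)
              + ((t1 : ℝ) + t2 + 2) * ((t3 : ℝ) + 1) / (((k : ℝ) + 1) * ((k : ℝ) + 2)))
            / Hdisc t1 t2 t3)) := by
  have hHd : 0 < Hdisc t1 t2 t3 := Hdisc_pos t1 t2 t3
  set A : ℝ := ((t1:ℝ)+1)/((k:ℝ)+1) with hA
  set B : ℝ := ((t1:ℝ)+t2+2)*((t3:ℝ)+1)/(((k:ℝ)+1)*((k:ℝ)+2)) with hB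
  set C : ℝ := ((t3:ℝ)+1)/((k:ℝ)+1) with hC
  set α : ℝ := (A+B)/Hdisc t1 t2 t3 with hal
  set c : ℝ := (A*((k:ℝ)+1)+B*((k:ℝ)+2)-C)/2 with hcdef
  have hαHd : α * Hdisc t1 t2 t3 = A + B := by
    rw [hal]; exact div_mul_cancel₀ _ (ne_of_gt hHd)
  set T : ℕ → ℝ := fun m => α*(((m:ℝ)+1)*harm (m+1)) + c with hTdef
  have hkne : ((k:ℝ)+1) ≠ 0 := by positivity
  have hsum3 : ((t1:ℝ)+1) + ((t2:ℝ)+1) + ((t3:ℝ)+1) = (k:ℝ)+1 := by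
    have : (k:ℝ) = ((t1+t2+t3+2 : ℕ):ℝ) := by rw [hk]
    rw [this]; push_cast; ring
  have hTrec : ∀ n : ℕ, w < n →
      T n = A * ((n:ℝ)-k) + B * ((n:ℝ)-k-1) + C
            + ∑ j ∈ Finset.range (n-1), wgt t1 t2 t3 n j * T j := by
    intro n hn
    have hkn : k ≤ n := le_trans hw hn.le
    have hsplit : ∑ j ∈ Finset.range (n-1), wgt t1 t2 t3 n j * T j
        = α * ∑ j ∈ Finset.range (n-1), wgt t1 t2 t3 n j * (((j:ℝ)+1) * harm (j+1))
          + c * ∑ j ∈ Finset.range (n-1), wgt t1 t2 t3 n j * 1 := by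
      rw [Finset.mul_sum, Finset.mul_sum, ← Finset.sum_add_distrib]
      refine Finset.sum_congr rfl fun j _ => ?_
      simp only [hTdef]
      ring
    rw [hsplit, sum_wgt_one t1 t2 t3 n k hk hkn]
    have h2 := Hdisc_eq t1 t2 t3 k hk
    have e1 : ((t1:ℝ)+1)*harm (t1+1) + ((t2:ℝ)+1)*harm (t2+1) + ((t3:ℝ)+1)*harm (t3+1)
        = ((k:ℝ)+1)*(harm (k+1) - Hdisc t1 t2 t3) := by
      linear_combination h2 + harm (k+1) * hsum3
    have hM3 : ∑ j ∈ Finset.range (n-1), wgt t1 t2 t3 n j * (((j:ℝ)+1) * harm (j+1))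
        = ((n:ℝ)+1) * (harm (n+1) - Hdisc t1 t2 t3) := by
      have h1 := sum_wgt_harm t1 t2 t3 n k hk hkn
      apply mul_left_cancel₀ hkne
      rw [h1]
      linear_combination ((n:ℝ)+1)*e1 + ((n:ℝ)+1)*(harm (n+1) - harm (k+1))*hsum3
    rw [hM3]
    simp only [hTdef]
    linear_combination ((n:ℝ)+1)*hαHd - 2*hcdef
  set D : ℕ → ℝ := fun m => S m - T m with hDdef
  have hDrec : ∀ n : ℕ, w < n →
      D n = ∑ j ∈ Finset.range (n-1), wgt t1 t2 t3 n j * D j := by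
    intro n hn
    have h1 := hrec n hn
    have h2 := hTrec n hn
    simp only [hDdef, mul_sub]
    rw [Finset.sum_sub_distrib]
    rw [h1, h2]
    ring
  set M : ℝ := ∑ j ∈ Finset.range (w+1), |D j| with hMdef
  have hM : 0 ≤ M := Finset.sum_nonneg (fun j _ => abs_nonneg _)
  have hbound : ∀ n : ℕ, |D n| ≤ M * ((n:ℝ)+1) := by
    intro n
    induction n using Nat.strong_induction_on with
    | _ n ih =>
      by_cases hn : n ≤ w
      · have h1 : |D n| ≤ M := by
          rw [hMdef]
          exact Finset.single_le_sum (f := fun j => |D j|) (fun j _ => abs_nonneg _)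
            (Finset.mem_range.2 (by omega))
        nlinarith [abs_nonneg (D n), Nat.cast_nonneg (α := ℝ) n]
      · push_neg at hn
        rw [hDrec n hn]
        calc |∑ j ∈ Finset.range (n-1), wgt t1 t2 t3 n j * D j|
            ≤ ∑ j ∈ Finset.range (n-1), |wgt t1 t2 t3 n j * D j| :=
              Finset.abs_sum_le_sum_abs _ _
          _ ≤ ∑ j ∈ Finset.range (n-1), wgt t1 t2 t3 n j * (M * ((j:ℝ)+1)) := by
              refine Finset.sum_le_sum fun j hj => ?_
              rw [abs_mul, abs_of_nonneg (wgt_nonneg t1 t2 t3 n j)]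
              have hjn : j < n := by
                have := Finset.mem_range.mp hj; omega
              exact mul_le_mul_of_nonneg_left (ih j hjn) (wgt_nonneg t1 t2 t3 n j)
          _ = M * ∑ j ∈ Finset.range (n-1), wgt t1 t2 t3 n j * ((j:ℝ)+1) := by
              rw [Finset.mul_sum]
              exact Finset.sum_congr rfl fun j _ => by ring
          _ = M * ((n:ℝ)+1) := by
              rw [sum_wgt_linear t1 t2 t3 n k hk (le_trans hw hn.le)]
  -- limits
  have hlog : Tendsto (fun n : ℕ => Real.log n) atTop atTop :=
    Real.tendsto_log_atTop.comp tendsto_natCast_atTop_atTop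
  have L0 : Tendsto (fun n : ℕ => 1 / Real.log n) atTop (nhds 0) := by
    simpa [one_div, Pi.inv_def] using hlog.inv_tendsto_atTop
  have L1 : Tendsto (fun n : ℕ => 1 / (n:ℝ)) atTop (nhds 0) :=
    tendsto_one_div_atTop_nhds_zero_nat
  have Lnn : Tendsto (fun n : ℕ => ((n:ℝ)+1)/(n:ℝ)) atTop (nhds 1) := by
    have h : Tendsto (fun n : ℕ => 1 + 1/(n:ℝ)) atTop (nhds (1+0)) :=
      tendsto_const_nhds.add L1
    rw [add_zero] at h
    refine Tendsto.congr' ?_ h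
    filter_upwards [eventually_ge_atTop 1] with n hn
    have hn0 : (n:ℝ) ≠ 0 := by
      have : (0:ℕ) < n := by omega
      exact_mod_cast Nat.pos_iff_ne_zero.mp this
    field_simp
  have Llog1 : Tendsto (fun n : ℕ => Real.log ((n:ℝ)+1) / Real.log n) atTop (nhds 1) := by
    have hl : Tendsto (fun n : ℕ => Real.log (((n:ℝ)+1)/(n:ℝ))) atTop (nhds 0) := by
      have := (Real.continuousAt_log (by norm_num : (1:ℝ) ≠ 0)).tendsto.comp Lnn
      simpa [Function.comp_def] using this
    have hmul : Tendsto (fun n : ℕ => Real.log (((n:ℝ)+1)/(n:ℝ)) * (1/Real.log n))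
        atTop (nhds 0) := by
      simpa using hl.mul L0
    have h : Tendsto (fun n : ℕ => 1 + Real.log (((n:ℝ)+1)/(n:ℝ)) * (1/Real.log n))
        atTop (nhds 1) := by
      simpa using tendsto_const_nhds.add hmul
    refine Tendsto.congr' ?_ h
    filter_upwards [eventually_ge_atTop 2] with n hn
    have hn1 : (1:ℝ) < (n:ℝ) := by exact_mod_cast (by omega : 1 < n)
    have hn0 : (n:ℝ) ≠ 0 := by linarith
    have hlogn : Real.log n ≠ 0 := ne_of_gt (Real.log_pos hn1)
    rw [Real.log_div (by linarith) hn0]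
    field_simp
    ring
  have Lharm : Tendsto (fun n : ℕ => harm (n+1) / Real.log n) atTop (nhds 1) := by
    have hγ := Real.tendsto_harmonic_sub_log
    have hγ' : Tendsto (fun n : ℕ => harm (n+1) - Real.log ((n:ℝ)+1)) atTop
        (nhds Real.eulerMascheroniConstant) := by
      have h := hγ.comp (tendsto_add_atTop_nat 1)
      refine Tendsto.congr (fun n => ?_) h
      simp only [Function.comp_apply, harm_eq]
      push_cast
      ring
    have hcomb : Tendsto (fun n : ℕ =>
        (harm (n+1) - Real.log ((n:ℝ)+1)) * (1/Real.log n)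
          + Real.log ((n:ℝ)+1)/Real.log n) atTop (nhds 1) := by
      have := (hγ'.mul L0).add Llog1
      simpa using this
    exact Tendsto.congr (fun n => by ring) hcomb
  have Lmain : Tendsto (fun n : ℕ => (((n:ℝ)+1) * harm (n+1)) / ((n:ℝ) * Real.log n))
      atTop (nhds 1) := by
    have h := Lnn.mul Lharm
    rw [one_mul] at h
    exact Tendsto.congr (fun n => by rw [div_mul_div_comm]) h
  have Lc : Tendsto (fun n : ℕ => c / ((n:ℝ) * Real.log n)) atTop (nhds 0) := by
    have h : Tendsto (fun n : ℕ => c * (1/(n:ℝ) * (1/Real.log n))) atTop (nhds 0) := by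
      simpa using (L1.mul L0).const_mul c
    exact Tendsto.congr (fun n => by ring) h
  have LD : Tendsto (fun n : ℕ => D n / ((n:ℝ) * Real.log n)) atTop (nhds 0) := by
    have hg : Tendsto (fun n : ℕ => M * (((n:ℝ)+1)/(n:ℝ) * (1/Real.log n))) atTop (nhds 0) := by
      have := (Lnn.mul L0).const_mul M
      simpa using this
    refine squeeze_zero_norm' ?_ hg
    filter_upwards [eventually_ge_atTop 2] with n hn
    have hn1 : (1:ℝ) < (n:ℝ) := by exact_mod_cast (by omega : 1 < n)
    have hL : 0 < Real.log n := Real.log_pos hn1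
    have hnL : 0 < (n:ℝ) * Real.log n := mul_pos (by linarith) hL
    rw [Real.norm_eq_abs, abs_div, abs_of_pos hnL]
    calc |D n| / ((n:ℝ)*Real.log n) ≤ (M*((n:ℝ)+1)) / ((n:ℝ)*Real.log n) := by
          gcongr
          exact hbound n
      _ = M * (((n:ℝ)+1)/(n:ℝ) * (1/Real.log n)) := by
          field_simp
  have hfinal : Tendsto (fun n : ℕ =>
      α * ((((n:ℝ)+1) * harm (n+1)) / ((n:ℝ)*Real.log n))
        + c/((n:ℝ)*Real.log n) + D n/((n:ℝ)*Real.log n)) atTop (nhds α) := by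
    have h := ((Lmain.const_mul α).add Lc).add LD
    simpa using h
  refine Tendsto.congr (fun n => ?_) hfinal
  have hS : S n = α*(((n:ℝ)+1)*harm (n+1)) + c + D n := by
    simp only [hDdef, hTdef]
    ring
  rw [hS]
  ring
end

section
/- Let t = (t₁,t₂,t₃) ∈ ℕ³ and k = t₁+t₂+t₃+2. Then ∫₀¹ z·w(z) dz = 1, where w(z) = Σ_{l=1}^{3} (k−t_l)·binom(k,t_l)·z^{t_l}·(1−z)^{k−t_l−1}. -/
open Finset intervalIntegral

lemma beta_nat (b : ℕ) : ∀ a : ℕ, ∫ x in (0:ℝ)..1, x ^ a * (1 - x) ^ b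
    = (a.factorial * b.factorial : ℝ) / (a + b + 1).factorial := by
  induction b with
  | zero =>
    intro a
    simp only [pow_zero, mul_one, integral_pow, one_pow, zero_pow, Nat.succ_ne_zero,
      Nat.factorial_succ, add_zero, Nat.factorial_zero, Nat.cast_one, mul_one]
    have : ((a:ℝ)+1) ≠ 0 := by positivity
    have hf : (a.factorial : ℝ) ≠ 0 := by exact_mod_cast a.factorial_ne_zero
    push_cast
    rw [eq_div_iff (by positivity)]
    field_simp
    simp
  | succ b ih =>
    intro a
    have hu : ∀ x ∈ Set.uIcc (0:ℝ) 1, HasDerivAt (fun x : ℝ => (1 - x) ^ (b + 1))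
        (-( (b+1 : ℝ) * (1 - x) ^ b)) x := by
      intro x _
      have h1 : HasDerivAt (fun x : ℝ => 1 - x) (-1) x := by
        simpa using (hasDerivAt_id x).const_sub 1
      have := (h1.fun_pow (b+1))
      refine this.congr_deriv ?_
      simp
    have hv : ∀ x ∈ Set.uIcc (0:ℝ) 1, HasDerivAt (fun x : ℝ => x ^ (a+1) / (a+1 : ℝ))
        (x ^ a) x := by
      intro x _
      have h1 := (hasDerivAt_pow (a+1) x).div_const (a+1 : ℝ)
      refine h1.congr_deriv ?_
      have : (a + 1 : ℝ) ≠ 0 := by positivity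
      push_cast; field_simp
    have hIBP := intervalIntegral.integral_mul_deriv_eq_deriv_mul hu hv
      (by apply Continuous.intervalIntegrable; fun_prop)
      (by apply Continuous.intervalIntegrable; fun_prop)
    have hcomm : ∫ x in (0:ℝ)..1, x ^ a * (1 - x) ^ (b+1)
        = ∫ x in (0:ℝ)..1, (1 - x) ^ (b+1) * x ^ a := by
      congr 1; ext x; ring
    rw [hcomm, hIBP]
    simp only [one_pow, sub_self, zero_pow, Nat.succ_ne_zero]
    have : ∫ x in (0:ℝ)..1, -((b+1:ℝ) * (1 - x) ^ b) * (x ^ (a+1) / (a+1:ℝ))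
        = -((b+1:ℝ)/(a+1:ℝ)) * ∫ x in (0:ℝ)..1, x ^ (a+1) * (1 - x) ^ b := by
      rw [← intervalIntegral.integral_const_mul]
      congr 1; ext x; ring
    rw [this, ih (a+1)]
    have ha : (a + 1 : ℝ) ≠ 0 := by positivity
    have hf : ((a + 1 + b + 1).factorial : ℝ) ≠ 0 := by
      exact_mod_cast (a+1+b+1).factorial_ne_zero
    have h1 : ((a+1).factorial : ℝ) = (a+1) * a.factorial := by
      rw [Nat.factorial_succ]; push_cast; ring
    have h2 : ((b+1).factorial : ℝ) = (b+1) * b.factorial := by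
      rw [Nat.factorial_succ]; push_cast; ring
    have h3 : (a + (b+1) + 1) = (a + 1 + b + 1) := by ring
    rw [h3, h1, h2]
    field_simp
    ring


lemma key (t s : ℕ) : (s+2) * ((t+s+2).choose t) * (t+1).factorial * (s+1).factorial
    = (t+1) * (t+s+2).factorial := by
  have h1 : (s+2) * (s+1).factorial = (s+2).factorial := (Nat.factorial_succ (s+1)).symm
  have h2 : (t+1).factorial = (t+1) * t.factorial := Nat.factorial_succ t
  have h3 : (t+s+2).choose t * t.factorial * ((t+s+2) - t).factorial = (t+s+2).factorial :=
    Nat.choose_mul_factorial_mul_factorial (by omega)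
  have h4 : (t+s+2) - t = s + 2 := by omega
  rw [h4] at h3
  calc (s+2) * ((t+s+2).choose t) * (t+1).factorial * (s+1).factorial
      = (t+1) * ((t+s+2).choose t * t.factorial * ((s+2) * (s+1).factorial)) := by
        rw [h2]; ring
    _ = (t+1) * ((t+s+2).choose t * t.factorial * (s+2).factorial) := by rw [h1]
    _ = (t+1) * (t+s+2).factorial := by rw [h3]

lemma key3 (t1 t2 t3 : ℕ) :
    (t2+t3+2)*((t1+t2+t3+2).choose t1)*(t1+1).factorial*(t2+t3+1).factorial
    + (t1+t3+2)*((t1+t2+t3+2).choose t2)*(t2+1).factorial*(t1+t3+1).factorial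
    + (t1+t2+2)*((t1+t2+t3+2).choose t3)*(t3+1).factorial*(t1+t2+1).factorial
    = (t1+t2+t3+3).factorial := by
  have k1 := key t1 (t2+t3)
  have k2 := key t2 (t1+t3)
  have k3 := key t3 (t1+t2)
  rw [show t1+(t2+t3)+2 = t1+t2+t3+2 from by omega] at k1
  rw [show t2+(t1+t3)+2 = t1+t2+t3+2 from by omega] at k2
  rw [show t3+(t1+t2)+2 = t1+t2+t3+2 from by omega] at k3
  rw [k1, k2, k3]
  have e : (t1+t2+t3+3).factorial = (t1+t2+t3+3) * (t1+t2+t3+2).factorial :=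
    Nat.factorial_succ _
  rw [e]; ring

lemma term_int (t m : ℕ) (c d : ℝ) :
    ∫ z in (0:ℝ)..1, z * (c * d * z ^ t * (1 - z) ^ m)
      = c * d * (((t+1).factorial * m.factorial : ℝ) / (t + 1 + m + 1).factorial) := by
  have h : (∫ z in (0:ℝ)..1, z * (c * d * z ^ t * (1 - z) ^ m))
      = ∫ z in (0:ℝ)..1, (c * d) * (z ^ (t+1) * (1 - z) ^ m) := by
    congr 1; ext z; ring
  rw [h, intervalIntegral.integral_const_mul, beta_nat m (t+1)]

/-- The shape function
`w(z) = ∑_{l=1}^3 (k−t_l) binom(k,t_l) z^{t_l} (1−z)^{k−t_l−1}`, `k = t₁+t₂+t₃+2`. -/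
noncomputable def shapeW (t1 t2 t3 : ℕ) (z : ℝ) : ℝ :=
  (((t1 + t2 + t3 + 2) - t1 : ℕ) : ℝ) * ((t1 + t2 + t3 + 2).choose t1 : ℝ)
      * z ^ t1 * (1 - z) ^ ((t1 + t2 + t3 + 2) - t1 - 1)
  + (((t1 + t2 + t3 + 2) - t2 : ℕ) : ℝ) * ((t1 + t2 + t3 + 2).choose t2 : ℝ)
      * z ^ t2 * (1 - z) ^ ((t1 + t2 + t3 + 2) - t2 - 1)
  + (((t1 + t2 + t3 + 2) - t3 : ℕ) : ℝ) * ((t1 + t2 + t3 + 2).choose t3 : ℝ)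
      * z ^ t3 * (1 - z) ^ ((t1 + t2 + t3 + 2) - t3 - 1)

/-- `∫₀¹ z w(z) dz = 1` for the shape function of the dual-pivot Quicksort recurrence. -/
theorem stmt13 (t1 t2 t3 : ℕ) :
    ∫ z in (0 : ℝ)..1, z * shapeW t1 t2 t3 z = 1 := by
  unfold shapeW
  rw [show (t1+t2+t3+2) - t1 = t2+t3+2 from by omega,
      show (t1+t2+t3+2) - t2 = t1+t3+2 from by omega,
      show (t1+t2+t3+2) - t3 = t1+t2+2 from by omega]
  rw [show t2+t3+2-1 = t2+t3+1 from by omega,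
      show t1+t3+2-1 = t1+t3+1 from by omega,
      show t1+t2+2-1 = t1+t2+1 from by omega]
  simp_rw [mul_add]
  rw [intervalIntegral.integral_add
        ((by fun_prop : Continuous fun z : ℝ => z * (((t2+t3+2:ℕ):ℝ) * ((t1+t2+t3+2).choose t1 : ℝ) * z ^ t1 * (1-z) ^ (t2+t3+1))
          + z * (((t1+t3+2:ℕ):ℝ) * ((t1+t2+t3+2).choose t2 : ℝ) * z ^ t2 * (1-z) ^ (t1+t3+1))).intervalIntegrable 0 1)
        ((by fun_prop : Continuous fun z : ℝ => z * (((t1+t2+2:ℕ):ℝ) * ((t1+t2+t3+2).choose t3 : ℝ) * z ^ t3 * (1-z) ^ (t1+t2+1))).intervalIntegrable 0 1),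
      intervalIntegral.integral_add
        ((by fun_prop : Continuous fun z : ℝ => z * (((t2+t3+2:ℕ):ℝ) * ((t1+t2+t3+2).choose t1 : ℝ) * z ^ t1 * (1-z) ^ (t2+t3+1))).intervalIntegrable 0 1)
        ((by fun_prop : Continuous fun z : ℝ => z * (((t1+t3+2:ℕ):ℝ) * ((t1+t2+t3+2).choose t2 : ℝ) * z ^ t2 * (1-z) ^ (t1+t3+1))).intervalIntegrable 0 1)]
  rw [term_int, term_int, term_int]
  rw [show t1+1+(t2+t3+1)+1 = t1+t2+t3+3 from by omega,
      show t2+1+(t1+t3+1)+1 = t1+t2+t3+3 from by omega,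
      show t3+1+(t1+t2+1)+1 = t1+t2+t3+3 from by omega]
  have hF : ((t1+t2+t3+3).factorial : ℝ) ≠ 0 := by
    exact_mod_cast (t1+t2+t3+3).factorial_ne_zero
  field_simp
  have h := key3 t1 t2 t3
  have h' : ((t2+t3+2:ℕ):ℝ)*(((t1+t2+t3+2).choose t1 : ℕ):ℝ)*((t1+1).factorial:ℝ)*((t2+t3+1).factorial:ℝ)
    + ((t1+t3+2:ℕ):ℝ)*(((t1+t2+t3+2).choose t2 : ℕ):ℝ)*((t2+1).factorial:ℝ)*((t1+t3+1).factorial:ℝ)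
    + ((t1+t2+2:ℕ):ℝ)*(((t1+t2+t3+2).choose t3 : ℕ):ℝ)*((t3+1).factorial:ℝ)*((t1+t2+1).factorial:ℝ)
    = ((t1+t2+t3+3).factorial:ℝ) := by exact_mod_cast h
  push_cast at h' ⊢
  linear_combination h'
end
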